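/- Let X₁, X₂, … be independent identically distributed real random variables with the logistic distribution function G(x) = 1/(1+e^{−x}), and for each n let Y_{1,n} = min(X₁,…,X_n). Define M_{1,n} = n · ∫₀^{1/(n+1)} (Y_{1,n} − ln(t/(1−t)))² · 6t(1−t) dt. Then M_{1,n} → 0 in probability as n → ∞, i.e., for every ε > 0, P(|M_{1,n}| > ε) → 0. -/

import Mathlib

open MeasureTheory ProbabilityTheory Filter Real

private lemma logQ_sq_mul_le {t : ℝ} (ht : 0 < t) (ht2 : t ≤ 1/2) :
    (Real.log (t / (1 - t)))^2 * t ≤ 16 * Real.sqrt t := by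
  have h1t : 0 < 1 - t := by linarith
  have hu : 0 < Real.sqrt t := Real.sqrt_pos.2 ht
  have huu : 0 < Real.sqrt (Real.sqrt t) := Real.sqrt_pos.2 hu
  have hlog1 : Real.log (1 / Real.sqrt (Real.sqrt t)) ≤ 1 / Real.sqrt (Real.sqrt t) - 1 :=
    Real.log_le_sub_one_of_pos (by positivity)
  have h2 : -Real.log (Real.sqrt (Real.sqrt t)) ≤ 1 / Real.sqrt (Real.sqrt t) := by
    rw [Real.log_div one_ne_zero (ne_of_gt huu), Real.log_one] at hlog1
    linarith
  have h3 : Real.log t = 4 * Real.log (Real.sqrt (Real.sqrt t)) := by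
    rw [Real.log_sqrt (Real.sqrt_nonneg t), Real.log_sqrt ht.le]; ring
  have h4 : -Real.log t ≤ 4 * (1 / Real.sqrt (Real.sqrt t)) := by
    rw [h3]; linarith
  have hdivpos : 0 < t / (1 - t) := by positivity
  have hle1 : t / (1 - t) ≤ 1 := by rw [div_le_one h1t]; linarith
  have hqu : Real.log (t / (1 - t)) ≤ 0 := Real.log_nonpos hdivpos.le hle1
  have htle : t ≤ t / (1 - t) := by
    rw [le_div_iff₀ h1t]; nlinarith
  have hql : Real.log t ≤ Real.log (t / (1 - t)) := Real.log_le_log ht htle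
  have hq2 : (Real.log (t / (1 - t)))^2 ≤ (4 * (1 / Real.sqrt (Real.sqrt t)))^2 := by
    apply sq_le_sq'
    · linarith
    · have : 0 ≤ 4 * (1 / Real.sqrt (Real.sqrt t)) := by positivity
      linarith
  have hsq : (Real.sqrt (Real.sqrt t))^2 = Real.sqrt t := Real.sq_sqrt hu.le
  have hq3 : (Real.log (t / (1 - t)))^2 ≤ 16 / Real.sqrt t := by
    calc (Real.log (t / (1 - t)))^2 ≤ (4 * (1 / Real.sqrt (Real.sqrt t)))^2 := hq2
      _ = 16 / (Real.sqrt (Real.sqrt t))^2 := by ring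
      _ = 16 / Real.sqrt t := by rw [hsq]
  calc (Real.log (t / (1 - t)))^2 * t ≤ (16 / Real.sqrt t) * t :=
        mul_le_mul_of_nonneg_right hq3 ht.le
    _ = 16 * (t / Real.sqrt t) := by ring
    _ = 16 * Real.sqrt t := by rw [Real.div_sqrt]

private lemma integral_bound (n : ℕ) (hn : 1 ≤ n) (y : ℝ) :
    |(n : ℝ) * ∫ t in (0:ℝ)..(1 / ((n : ℝ) + 1)),
        (y - Real.log (t / (1 - t))) ^ 2 * (6 * t * (1 - t))| ≤
      12 * y ^ 2 / n + 192 / Real.sqrt n := by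
  have hn1 : (1:ℝ) ≤ (n:ℝ) := by exact_mod_cast hn
  have hn0 : (0:ℝ) < (n:ℝ) := by linarith
  set δ : ℝ := 1 / ((n : ℝ) + 1) with hδdef
  have hδ0 : 0 < δ := by positivity
  have hδ2 : δ ≤ 1/2 := by
    rw [hδdef, div_le_div_iff₀ (by linarith) two_pos]; linarith
  have hC : ∀ x ∈ Set.uIoc (0:ℝ) δ,
      ‖(y - Real.log (x / (1 - x))) ^ 2 * (6 * x * (1 - x))‖ ≤
        12 * y^2 * δ + 192 * Real.sqrt δ := by
    intro x hx
    rw [Set.uIoc_of_le hδ0.le] at hx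
    obtain ⟨hx0, hxδ⟩ := hx
    have hx2 : x ≤ 1/2 := le_trans hxδ hδ2
    have h1x : 0 < 1 - x := by linarith
    have hq := logQ_sq_mul_le hx0 hx2
    set q := Real.log (x / (1 - x)) with hqdef
    have hnn : 0 ≤ 6 * x * (1 - x) := by positivity
    have hsq : (y - q)^2 ≤ 2*y^2 + 2*q^2 := by nlinarith [sq_nonneg (y + q)]
    have h6 : 6 * x * (1 - x) ≤ 6 * x := by nlinarith
    have hb : (y - q)^2 * (6*x*(1-x)) ≤ (2*y^2 + 2*q^2) * (6*x) :=
      mul_le_mul hsq h6 hnn (by positivity)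
    have hst : Real.sqrt x ≤ Real.sqrt δ := Real.sqrt_le_sqrt hxδ
    rw [Real.norm_eq_abs, abs_of_nonneg (mul_nonneg (sq_nonneg _) hnn)]
    calc (y - q)^2 * (6*x*(1-x)) ≤ (2*y^2 + 2*q^2) * (6*x) := hb
      _ = 12*(y^2*x) + 12*(q^2 * x) := by ring
      _ ≤ 12*(y^2*δ) + 12*(16*Real.sqrt x) := by
          have h1 : y^2*x ≤ y^2*δ := mul_le_mul_of_nonneg_left hxδ (sq_nonneg y)
          have h2 : q^2 * x ≤ 16*Real.sqrt x := hq
          linarith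
      _ ≤ 12*y^2*δ + 192*Real.sqrt δ := by nlinarith
  have hnorm := intervalIntegral.norm_integral_le_of_norm_le_const hC
  rw [sub_zero, abs_of_nonneg hδ0.le] at hnorm
  have hIb : |∫ t in (0:ℝ)..δ, (y - Real.log (t / (1 - t))) ^ 2 * (6 * t * (1 - t))|
      ≤ (12 * y^2 * δ + 192 * Real.sqrt δ) * δ := hnorm
  have habs : |(n : ℝ) * ∫ t in (0:ℝ)..δ, (y - Real.log (t / (1 - t))) ^ 2 * (6 * t * (1 - t))|
      = (n:ℝ) * |∫ t in (0:ℝ)..δ, (y - Real.log (t / (1 - t))) ^ 2 * (6 * t * (1 - t))| := by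
    rw [abs_mul, abs_of_nonneg hn0.le]
  rw [habs]
  have key1 : (n:ℝ) * δ^2 ≤ 1/n := by
    rw [hδdef, div_pow, one_pow, ← mul_div_assoc, mul_one, div_le_div_iff₀ (by positivity) hn0]
    nlinarith
  have key2 : (n:ℝ) * δ * Real.sqrt δ ≤ 1 / Real.sqrt n := by
    have ha : (n:ℝ) * δ ≤ 1 := by
      rw [hδdef, ← mul_div_assoc, mul_one, div_le_one (by linarith)]; linarith
    have hb' : Real.sqrt δ ≤ 1 / Real.sqrt n := by
      rw [hδdef, one_div, one_div, ← Real.sqrt_inv]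
      apply Real.sqrt_le_sqrt
      rw [inv_le_inv₀ (by linarith) hn0]; linarith
    calc (n:ℝ) * δ * Real.sqrt δ ≤ 1 * Real.sqrt δ :=
          mul_le_mul_of_nonneg_right ha (Real.sqrt_nonneg _)
      _ = Real.sqrt δ := one_mul _
      _ ≤ 1 / Real.sqrt n := hb'
  calc (n:ℝ) * |∫ t in (0:ℝ)..δ, (y - Real.log (t / (1 - t))) ^ 2 * (6 * t * (1 - t))|
      ≤ (n:ℝ) * ((12 * y^2 * δ + 192 * Real.sqrt δ) * δ) :=
        mul_le_mul_of_nonneg_left hIb hn0.le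
    _ = 12 * y^2 * ((n:ℝ) * δ^2) + 192 * ((n:ℝ) * δ * Real.sqrt δ) := by ring
    _ ≤ 12 * y^2 * (1/n) + 192 * (1 / Real.sqrt n) := by
        have h1 : 12 * y^2 * ((n:ℝ) * δ^2) ≤ 12 * y^2 * (1/n) :=
          mul_le_mul_of_nonneg_left key1 (by positivity)
        have h2 : 192 * ((n:ℝ) * δ * Real.sqrt δ) ≤ 192 * (1 / Real.sqrt n) :=
          mul_le_mul_of_nonneg_left key2 (by norm_num)
        linarith
    _ = 12 * y ^ 2 / n + 192 / Real.sqrt n := by ring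

private lemma tendsto_aux (c : ℝ) (hc : 0 < c) :
    Tendsto (fun n : ℕ => ((n:ℝ) + 1) * Real.exp (-(c * Real.sqrt n))) atTop (nhds 0) := by
  have hg : Tendsto (fun x : ℝ => x^2/c^2 * Real.exp (-x) + Real.exp (-x)) atTop (nhds 0) := by
    have h1 : Tendsto (fun x : ℝ => x ^ 2 * Real.exp (-x)) atTop (nhds 0) :=
      tendsto_pow_mul_exp_neg_atTop_nhds_zero 2
    have h2 : Tendsto (fun x : ℝ => Real.exp (-x)) atTop (nhds 0) :=
      tendsto_exp_neg_atTop_nhds_zero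
    have h3 := (h1.div_const (c^2)).add h2
    simp only [zero_div, zero_add] at h3
    refine h3.congr fun x => ?_
    ring
  have hsqrt : Tendsto (fun x : ℝ => Real.sqrt x) atTop atTop :=
    (tendsto_rpow_atTop (by norm_num : (0:ℝ) < 1/2)).congr (fun x => (Real.sqrt_eq_rpow x).symm)
  have hcomp : Tendsto (fun n : ℕ => c * Real.sqrt n) atTop atTop :=
    (hsqrt.comp tendsto_natCast_atTop_atTop).const_mul_atTop hc
  have h := hg.comp hcomp
  refine h.congr fun n => ?_
  have hn0 : (0:ℝ) ≤ (n:ℝ) := n.cast_nonneg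
  have : (c * Real.sqrt n)^2 = c^2 * (n:ℝ) := by
    rw [mul_pow, Real.sq_sqrt hn0]
  simp only [Function.comp_apply, this]
  have hc2 : (c:ℝ)^2 ≠ 0 := by positivity
  field_simp

/-- If `X₁, X₂, …` are i.i.d. with logistic distribution function `G(x) = 1/(1+e^{−x})`,
`Y_{1,n} = min(X₁,…,X_n)`, and
`M_{1,n} = n · ∫₀^{1/(n+1)} (Y_{1,n} − ln(t/(1−t)))² · 6t(1−t) dt`,
then `M_{1,n} → 0` in probability. -/
theorem logistic_min_tail_integral_to_zero_in_probability
    {Ω : Type*} [MeasurableSpace Ω] (P : Measure Ω) [IsProbabilityMeasure P]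
    (X : ℕ → Ω → ℝ) (hmeas : ∀ i, Measurable (X i))
    (hindep : iIndepFun X P)
    (hdist : ∀ i, ∀ x : ℝ, (P {ω | X i ω ≤ x}).toReal = 1 / (1 + Real.exp (-x))) :
    ∀ ε > (0:ℝ),
      Tendsto (fun n : ℕ =>
          (P {ω | ε <
              |(n : ℝ) * ∫ t in (0:ℝ)..(1 / ((n : ℝ) + 1)),
                  ((⨅ i : Fin n, X i ω) - Real.log (t / (1 - t))) ^ 2 *
                    (6 * t * (1 - t))|}).toReal)
        atTop (nhds 0) := by
  intro ε hε
  set c : ℝ := Real.sqrt (ε/24) with hcdef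
  have hc0 : 0 < c := Real.sqrt_pos.2 (by linarith)
  have hsqrt : Tendsto (fun x : ℝ => Real.sqrt x) atTop atTop :=
    (tendsto_rpow_atTop (by norm_num : (0:ℝ) < 1/2)).congr (fun x => (Real.sqrt_eq_rpow x).symm)
  refine tendsto_of_tendsto_of_tendsto_of_le_of_le' tendsto_const_nhds (tendsto_aux c hc0)
    (Eventually.of_forall fun n => ENNReal.toReal_nonneg) ?_
  have hev1 : ∀ᶠ n : ℕ in atTop, 384/ε ≤ Real.sqrt n :=
    (hsqrt.comp tendsto_natCast_atTop_atTop).eventually_ge_atTop _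
  filter_upwards [hev1, eventually_ge_atTop 1] with n hsq hn1
  have hn1' : (1:ℝ) ≤ (n:ℝ) := by exact_mod_cast hn1
  have hn0 : (0:ℝ) < (n:ℝ) := by linarith
  have hsn0 : 0 < Real.sqrt n := Real.sqrt_pos.2 hn0
  set a : ℝ := c * Real.sqrt n with hadef
  have ha0 : 0 < a := mul_pos hc0 hsn0
  -- the bound 192/√n ≤ ε/2
  have h192 : 192 / Real.sqrt n ≤ ε / 2 := by
    rw [div_le_iff₀ hsn0]
    have := (div_le_iff₀ hε).mp hsq
    linarith
  -- set inclusion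
  have hsub : {ω | ε <
        |(n : ℝ) * ∫ t in (0:ℝ)..(1 / ((n : ℝ) + 1)),
            ((⨅ i : Fin n, X i ω) - Real.log (t / (1 - t))) ^ 2 *
              (6 * t * (1 - t))|} ⊆
      {ω | a < X 0 ω} ∪ ⋃ i : Fin n, {ω | X i ω < -a} := by
    intro ω hω
    simp only [Set.mem_setOf_eq] at hω
    by_contra hS
    simp only [Set.mem_union, Set.mem_iUnion, Set.mem_setOf_eq, not_or, not_exists, not_lt] at hS
    obtain ⟨h0, hall⟩ := hS
    have hne : Nonempty (Fin n) := ⟨⟨0, hn1⟩⟩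
    set Y : ℝ := ⨅ i : Fin n, X i ω with hYdef
    have hYle : Y ≤ a := by
      have h := ciInf_le (Set.Finite.bddBelow (Set.finite_range (fun i : Fin n => X i ω)))
        (⟨0, hn1⟩ : Fin n)
      exact le_trans h h0
    have hYge : -a ≤ Y := le_ciInf fun i => hall i
    have ha2 : a^2 = ε/24 * n := by
      rw [hadef, mul_pow, hcdef, Real.sq_sqrt (by linarith : (0:ℝ) ≤ ε/24),
        Real.sq_sqrt hn0.le]
    have hY2 : Y^2 ≤ ε/24 * n := ha2 ▸ sq_le_sq' hYge hYle
    have h12 : 12 * Y^2 / n ≤ ε / 2 := by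
      rw [div_le_iff₀ hn0]; nlinarith
    have hbound := integral_bound n hn1 Y
    linarith
  -- measure bound
  set A : Set Ω := {ω | a < X 0 ω} with hAdef
  set B : Fin n → Set Ω := fun i => {ω | X i ω < -a} with hBdef
  have hPA : (P A).toReal ≤ Real.exp (-a) := by
    have hAc : A = {ω | X 0 ω ≤ a}ᶜ := by
      ext ω; simp [hAdef, not_le]
    have hms : MeasurableSet {ω | X 0 ω ≤ a} := (hmeas 0) measurableSet_Iic
    have hcompl : P A = 1 - P {ω | X 0 ω ≤ a} := by
      rw [hAc, measure_compl hms (measure_ne_top P _), measure_univ]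
    rw [hcompl, ENNReal.toReal_sub_of_le prob_le_one ENNReal.one_ne_top, ENNReal.toReal_one,
      hdist 0 a]
    set E := Real.exp (-a) with hE
    have hE0 : 0 < E := Real.exp_pos _
    have h1E : 0 < 1 + E := by linarith
    have hmul : (1 - E) * (1 + E) ≤ 1 := by nlinarith
    have : 1 - E ≤ 1 / (1 + E) := (le_div_iff₀ h1E).2 hmul
    linarith
  have hPB : ∀ i : Fin n, (P (B i)).toReal ≤ Real.exp (-a) := by
    intro i
    have hsub' : B i ⊆ {ω | X i ω ≤ -a} := by
      intro ω hω
      simp only [hBdef, Set.mem_setOf_eq] at hω ⊢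
      exact hω.le
    have h1 : (P (B i)).toReal ≤ (P {ω | X i ω ≤ -a}).toReal :=
      ENNReal.toReal_mono (measure_ne_top P _) (measure_mono hsub')
    rw [hdist i (-a), neg_neg] at h1
    have hE0 : 0 < Real.exp a := Real.exp_pos _
    have h2 : 1 / (1 + Real.exp a) ≤ 1 / Real.exp a :=
      one_div_le_one_div_of_le hE0 (by linarith)
    rw [Real.exp_neg]
    calc (P (B i)).toReal ≤ 1 / (1 + Real.exp a) := h1
      _ ≤ 1 / Real.exp a := h2
      _ = (Real.exp a)⁻¹ := one_div _
  -- combine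
  have hmono : (P {ω | ε <
        |(n : ℝ) * ∫ t in (0:ℝ)..(1 / ((n : ℝ) + 1)),
            ((⨅ i : Fin n, X i ω) - Real.log (t / (1 - t))) ^ 2 *
              (6 * t * (1 - t))|}).toReal ≤ (P (A ∪ ⋃ i : Fin n, B i)).toReal :=
    ENNReal.toReal_mono (measure_ne_top P _) (measure_mono hsub)
  have hunion : (P (A ∪ ⋃ i : Fin n, B i)).toReal ≤
      (P A).toReal + ∑ i : Fin n, (P (B i)).toReal := by
    have h1 : P (A ∪ ⋃ i : Fin n, B i) ≤ P A + ∑ i : Fin n, P (B i) := by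
      refine le_trans (measure_union_le _ _) ?_
      gcongr
      exact le_trans (measure_iUnion_le _) (le_of_eq (tsum_fintype _))
    have h2 := ENNReal.toReal_mono
      (by
        refine ENNReal.add_ne_top.2 ⟨measure_ne_top P _, ?_⟩
        exact (ENNReal.sum_lt_top.2 fun i _ => (measure_lt_top P _)).ne) h1
    rwa [ENNReal.toReal_add (measure_ne_top P _)
      ((ENNReal.sum_lt_top.2 fun i _ => (measure_lt_top P _)).ne),
      ENNReal.toReal_sum (fun i _ => measure_ne_top P _)] at h2
  have hsum : ∑ i : Fin n, (P (B i)).toReal ≤ (n:ℝ) * Real.exp (-a) := by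
    calc ∑ i : Fin n, (P (B i)).toReal ≤ ∑ _i : Fin n, Real.exp (-a) :=
          Finset.sum_le_sum fun i _ => hPB i
      _ = (n:ℝ) * Real.exp (-a) := by
          rw [Finset.sum_const, Finset.card_univ, Fintype.card_fin, nsmul_eq_mul]
  calc (P _).toReal ≤ (P (A ∪ ⋃ i : Fin n, B i)).toReal := hmono
    _ ≤ (P A).toReal + ∑ i : Fin n, (P (B i)).toReal := hunion
    _ ≤ Real.exp (-a) + (n:ℝ) * Real.exp (-a) := by linarith
    _ = ((n:ℝ) + 1) * Real.exp (-(c * Real.sqrt n)) := by rw [hadef]; ring
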